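/- Let k ≥ 4 be an even integer and let q be the smallest prime power with k ≤ q. Then n(k,7) ≤ 2kq² − q. In particular, if q is an odd prime power, then n(q−1,7) ≤ 2q³ − 2q² − q = 2(q−1)³ + 4(q−1)² + (q−1) − 1. -/

import Mathlib

namespace Cage7

variable {F : Type} [Field F]

/-- Configuration data for the construction. -/
structure Cfg (F : Type) [Field F] : Type where
  m0 : F
  A : Finset F
  S : Finset F
  sg : F → F
  hm0S : m0 ∈ S
  star : ∀ m ∈ S, m ^ 2 = m0 ^ 2 → m = m0
  sgA : ∀ a ∈ A, sg a ∈ A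
  sginv : ∀ a ∈ A, sg (sg a) = a
  sgne : ∀ a ∈ A, sg a ≠ a

variable (c : Cfg F)

/-- Points: (a, b, c) with a in A. -/
abbrev Pt := {x // x ∈ c.A} × F × F
/-- Lines: (m, u, v) with m in S, minus the deleted class m = m0, v = 0. -/
abbrev Ln := {l : {m // m ∈ c.S} × F × F // ¬((l.1.1 : F) = c.m0 ∧ l.2.2 = 0)}

abbrev V := Pt c ⊕ Ln c

/-- Incidence of a point with a line. -/
def inc (p : Pt c) (l : Ln c) : Prop :=
  p.2.1 = l.1.1.1 * p.1.1 + l.1.2.1 ∧ p.2.2 = l.1.1.1 ^ 2 * p.1.1 + l.1.2.2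

/-- The matching between special points. -/
def pp (p p' : Pt c) : Prop :=
  p.2.2 = c.m0 ^ 2 * p.1.1 ∧ p'.2.2 = c.m0 ^ 2 * p'.1.1 ∧
  (p'.1.1 : F) = c.sg p.1.1 ∧ (p.1.1 : F) = c.sg p'.1.1 ∧
  p'.2.1 - c.m0 * p'.1.1 = p.2.1 - c.m0 * p.1.1 ∧ p.1.1 ≠ p'.1.1

def adj : V c → V c → Prop
  | .inl p, .inl p' => pp c p p'
  | .inl p, .inr l => inc c p l
  | .inr l, .inl p => inc c p l
  | .inr _, .inr _ => False

/-- The graph. -/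
def G : SimpleGraph (V c) where
  Adj := adj c
  symm := by
    constructor
    rintro (p | l) (p' | l') h <;> simp only [adj] at h ⊢
    · obtain ⟨h1, h2, h3, h4, h5, h6⟩ := h
      exact ⟨h2, h1, h4, h3, h5.symm, fun hx => h6 hx.symm⟩
    · exact h
    · exact h
  loopless := by
    constructor
    rintro (p | l) h <;> simp only [adj] at h
    · exact h.2.2.2.2.2 rfl

@[simp] lemma G_adj_pp (p p' : Pt c) : (G c).Adj (.inl p) (.inl p') ↔ pp c p p' := Iff.rfl
@[simp] lemma G_adj_pl (p : Pt c) (l : Ln c) : (G c).Adj (.inl p) (.inr l) ↔ inc c p l := Iff.rfl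
@[simp] lemma G_adj_lp (p : Pt c) (l : Ln c) : (G c).Adj (.inr l) (.inl p) ↔ inc c p l := Iff.rfl
@[simp] lemma G_adj_ll (l l' : Ln c) : ¬ (G c).Adj (.inr l) (.inr l') := fun h => h

/-- Point extensionality. -/
lemma Pt.ext {p p' : Pt c} (h1 : (p.1.1 : F) = p'.1.1) (h2 : p.2.1 = p'.2.1)
    (h3 : p.2.2 = p'.2.2) : p = p' := by
  obtain ⟨a, b, cc⟩ := p; obtain ⟨a', b', cc'⟩ := p'
  simp only at h1 h2 h3
  rw [Prod.ext_iff, Prod.ext_iff]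
  exact ⟨Subtype.ext h1, h2, h3⟩

/-- Line extensionality: slope u v determine the line. -/
lemma Ln.ext' {l l' : Ln c} (h1 : (l.1.1.1 : F) = l'.1.1.1) (h2 : l.1.2.1 = l'.1.2.1)
    (h3 : l.1.2.2 = l'.1.2.2) : l = l' := by
  obtain ⟨⟨m, u, v⟩, hl⟩ := l; obtain ⟨⟨m', u', v'⟩, hl'⟩ := l'
  simp only at h1 h2 h3
  apply Subtype.ext
  rw [Prod.ext_iff, Prod.ext_iff]
  exact ⟨Subtype.ext h1, h2, h3⟩

end Cage7

namespace Cage7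
variable {F : Type} [Field F] {c : Cfg F}

/-- A special point (lies on a deleted line). -/
def sp (p : Pt c) : Prop := p.2.2 = c.m0 ^ 2 * p.1.1

lemma pp_sp_left {p p' : Pt c} (h : pp c p p') : sp p := h.1
lemma pp_sp_right {p p' : Pt c} (h : pp c p p') : sp p' := h.2.1

/-- Two lines through a common point with the same slope are equal. -/
lemma line_eq_of_slope {p : Pt c} {l l' : Ln c} (h : inc c p l) (h' : inc c p l')
    (hs : (l.1.1.1 : F) = l'.1.1.1) : l = l' := by
  obtain ⟨hb, hc⟩ := h; obtain ⟨hb', hc'⟩ := h'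
  refine Ln.ext' c hs ?_ ?_
  · linear_combination hb' - hb - (p.1.1 : F) * hs
  · linear_combination hc' - hc -
      (p.1.1 : F) * ((l.1.1.1 : F) + (l'.1.1.1 : F)) * hs
/-- Two distinct points lie on at most one common line. -/
lemma line_eq_of_two_points {p q : Pt c} {l l' : Ln c} (hpq : p ≠ q)
    (h1 : inc c p l) (h2 : inc c q l) (h3 : inc c p l') (h4 : inc c q l') : l = l' := by
  by_cases ha : (p.1.1 : F) = q.1.1
  · exfalso; apply hpq; apply Pt.ext c ha
    · rw [h1.1, h2.1, ha]
    · rw [h1.2, h2.2, ha]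
  · have hm : (l.1.1.1 : F) = l'.1.1.1 := by
      have key : ((l.1.1.1 : F) - l'.1.1.1) * ((p.1.1 : F) - q.1.1) = 0 := by
        linear_combination h2.1 - h1.1 + h3.1 - h4.1
      rcases mul_eq_zero.mp key with h | h
      · exact sub_eq_zero.mp h
      · exact absurd (sub_eq_zero.mp h) ha
    exact line_eq_of_slope h1 h3 hm

/-- A line through a special point does not have slope m0. -/
lemma slope_ne_m0 {p : Pt c} {l : Ln c} (h : inc c p l) (hs : sp p) :
    (l.1.1.1 : F) ≠ c.m0 := by
  intro hm
  apply l.2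
  refine ⟨hm, ?_⟩
  rw [sp] at hs
  linear_combination hs - h.2 - ((p.1.1 : F) * ((l.1.1.1 : F) + c.m0)) * hm

/-- No line contains two distinct special points. -/
lemma no_two_special {p q : Pt c} {l : Ln c} (hp : sp p) (hq : sp q) (hpq : p ≠ q)
    (h1 : inc c p l) (h2 : inc c q l) : False := by
  by_cases ha : (p.1.1 : F) = q.1.1
  · apply hpq; apply Pt.ext c ha
    · rw [h1.1, h2.1, ha]
    · rw [h1.2, h2.2, ha]
  · have hsq : (l.1.1.1 : F) ^ 2 = c.m0 ^ 2 := by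
      have key : ((l.1.1.1 : F) ^ 2 - c.m0 ^ 2) * ((p.1.1 : F) - q.1.1) = 0 := by
        rw [sp] at hp hq
        linear_combination hp - hq - h1.2 + h2.2
      rcases mul_eq_zero.mp key with h | h
      · exact sub_eq_zero.mp h
      · exact absurd (sub_eq_zero.mp h) ha
    have hm : (l.1.1.1 : F) = c.m0 := c.star _ l.1.1.2 hsq
    exact slope_ne_m0 h1 hp hm

/-- The matching partner is unique. -/
lemma pp_unique {y x z : Pt c} (h1 : pp c y x) (h2 : pp c y z) : x = z := by
  obtain ⟨_, hx2, hx3, _, hx5, _⟩ := h1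
  obtain ⟨_, hz2, hz3, _, hz5, _⟩ := h2
  have ha : (x.1.1 : F) = z.1.1 := hx3.trans hz3.symm
  refine Pt.ext c ha ?_ ?_
  · linear_combination hx5 - hz5 + c.m0 * ha
  · rw [hx2, hz2, ha]

/-- Key Vandermonde-style lemma: three lines with pairwise distinct slopes which
pairwise meet have two of the meeting points equal. Pure field computation. -/
lemma no_tri {m1 m2 m3 u1 v1 u2 v2 u3 v3 a1 b1 c1 a2 b2 c2 a3 b3 c3 : F}
    (h13 : m1 ≠ m3) (h23 : m2 ≠ m3)
    (hb12 : b1 = m2 * a1 + u2) (hc12 : c1 = m2 ^ 2 * a1 + v2)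
    (hb13 : b1 = m3 * a1 + u3) (hc13 : c1 = m3 ^ 2 * a1 + v3)
    (hb23 : b2 = m3 * a2 + u3) (hc23 : c2 = m3 ^ 2 * a2 + v3)
    (hb21 : b2 = m1 * a2 + u1) (hc21 : c2 = m1 ^ 2 * a2 + v1)
    (hb31 : b3 = m1 * a3 + u1) (hc31 : c3 = m1 ^ 2 * a3 + v1)
    (hb32 : b3 = m2 * a3 + u2) (hc32 : c3 = m2 ^ 2 * a3 + v2) :
    a1 = a2 ∧ b1 = b2 ∧ c1 = c2 := by
  have E1 : (m1 - m2) * a3 + (m2 - m3) * a1 + (m3 - m1) * a2 = 0 := by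
    linear_combination (hb32 - hb31) + (hb13 - hb12) + (hb21 - hb23)
  have E2 : (m1 ^ 2 - m2 ^ 2) * a3 + (m2 ^ 2 - m3 ^ 2) * a1 + (m3 ^ 2 - m1 ^ 2) * a2 = 0 := by
    linear_combination (hc32 - hc31) + (hc13 - hc12) + (hc21 - hc23)
  have key : ((m3 - m1) * (m2 - m3)) * (a1 - a2) = 0 := by
    linear_combination E2 - (m1 + m2) * E1
  have hne1 : m3 - m1 ≠ 0 := sub_ne_zero.mpr (Ne.symm h13)
  have hne2 : m2 - m3 ≠ 0 := sub_ne_zero.mpr h23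
  have ha : a1 = a2 := by
    rcases mul_eq_zero.mp key with h | h
    · rcases mul_eq_zero.mp h with h' | h'
      · exact absurd h' hne1
      · exact absurd h' hne2
    · exact sub_eq_zero.mp h
  refine ⟨ha, ?_, ?_⟩
  · rw [hb13, hb23, ha]
  · rw [hc13, hc23, ha]

end Cage7

namespace Cage7
open SimpleGraph
variable {F : Type} [Field F] {c : Cfg F}

lemma pp_symm {p q : Pt c} (h : pp c p q) : pp c q p :=
  ⟨h.2.1, h.1, h.2.2.2.1, h.2.2.1, h.2.2.2.2.1.symm, fun hx => h.2.2.2.2.2 hx.symm⟩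

lemma pp_ne {p q : Pt c} (h : pp c p q) : p ≠ q := by
  intro he; exact h.2.2.2.2.2 (by rw [he])

/-- Hexagon case: three lines pairwise meeting in a 6-cycle is impossible. -/
lemma hex {l1 l2 l3 : Ln c} {p q r : Pt c}
    (hp1 : inc c p l1) (hp2 : inc c p l2) (hq2 : inc c q l2) (hq3 : inc c q l3)
    (hr3 : inc c r l3) (hr1 : inc c r l1)
    (h23 : l2 ≠ l3) (h13 : l1 ≠ l3) (hqr : q ≠ r) : False := by
  have hm13 : (l1.1.1.1 : F) ≠ l3.1.1.1 := fun h => h13 (line_eq_of_slope hr1 hr3 h)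
  have hm23 : (l2.1.1.1 : F) ≠ l3.1.1.1 := fun h => h23 (line_eq_of_slope hq2 hq3 h)
  obtain ⟨ha, hb, hc⟩ := no_tri hm13 hm23 hq2.1 hq2.2 hq3.1 hq3.2 hr3.1 hr3.2
    hr1.1 hr1.2 hp1.1 hp1.2 hp2.1 hp2.2
  exact hqr (Pt.ext c ha hb hc)

/-- Pentagon case: a matched pair joined by a path of length 4 is impossible. -/
lemma five {p q r : Pt c} {l1 l2 : Ln c} (hpq : pp c p q)
    (hq1 : inc c q l1) (hr1 : inc c r l1) (hr2 : inc c r l2) (hp2 : inc c p l2)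
    (hl : l1 ≠ l2) (hqr : q ≠ r) : False := by
  -- the virtual deleted line D = (m0, u, 0) through p and q
  set u : F := p.2.1 - c.m0 * p.1.1 with hu
  have hpD1 : p.2.1 = c.m0 * p.1.1 + u := by rw [hu]; ring
  have hpD2 : p.2.2 = c.m0 ^ 2 * p.1.1 + 0 := by rw [hpq.1]; ring
  have hqD1 : q.2.1 = c.m0 * q.1.1 + u := by
    have h5 := hpq.2.2.2.2.1
    rw [hu]; linear_combination h5
  have hqD2 : q.2.2 = c.m0 ^ 2 * q.1.1 + 0 := by rw [hpq.2.1]; ring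
  -- slopes
  have hm1 : (l1.1.1.1 : F) ≠ c.m0 := slope_ne_m0 hq1 (pp_sp_right hpq)
  have hm2 : (l2.1.1.1 : F) ≠ c.m0 := slope_ne_m0 hp2 (pp_sp_left hpq)
  have hm12 : (l2.1.1.1 : F) ≠ l1.1.1.1 := fun h => hl (line_eq_of_slope hr1 hr2 h.symm)
  -- no_tri with M1 := l2, M2 := D, M3 := l1; pt1 := r?? recompute:
  -- choose M1 := l2, M2 := D (slope m0, u, 0), M3 := l1.
  -- pt1 on (M2, M3) := q ; pt2 on (M3, M1) := r ; pt3 on (M1, M2) := p.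
  -- conclusion pt1 = pt2 : q = r, contradiction.
  have h13' : (l2.1.1.1 : F) ≠ l1.1.1.1 := hm12
  have h23' : (c.m0 : F) ≠ l1.1.1.1 := Ne.symm hm1
  obtain ⟨ha, hb, hc⟩ := no_tri h13' h23' hqD1 hqD2 hq1.1 hq1.2 hr1.1 hr1.2
    hr2.1 hr2.2 hp2.1 hp2.2 hpD1 hpD2
  exact hqr (Pt.ext c ha hb hc)

end Cage7

namespace Cage7
open SimpleGraph
variable {F : Type} [Field F] {c : Cfg F}

lemma no_short (v : V c) (w : (G c).Walk v v) (hw : w.IsCycle) : 7 ≤ w.length := by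
  by_contra hlen
  push_neg at hlen
  rcases w with - | @⟨_, v1, _, h01, w1⟩
  · have := hw.three_le_length; simp at this
  rcases w1 with - | @⟨_, v2, _, h12, w2⟩
  · have := hw.three_le_length; simp at this
  rcases w2 with - | @⟨_, v3, _, h23, w3⟩
  · have := hw.three_le_length; simp at this
  rcases w3 with - | @⟨_, v4, _, h34, w4⟩
  · -- cycle of length 3
    obtain ⟨-, -, hnd⟩ := (Walk.isCycle_def _).mp hw
    simp only [Walk.support_cons, Walk.support_nil, List.tail_cons, List.nodup_cons,
      List.mem_cons, List.mem_singleton, List.not_mem_nil, or_false, List.nodup_nil,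
      and_true, not_false_eq_true, not_or] at hnd
    obtain ⟨⟨nd12, nd10⟩, nd20⟩ := hnd
    rcases v with p0 | l0 <;>
    rcases v1 with p1 | l1 <;>
    rcases v2 with p2 | l2 <;>
      simp only [G_adj_pp, G_adj_pl, G_adj_lp, G_adj_ll] at h01 h12 h23
    · -- PPP
      exact (fun h => nd20 (congrArg Sum.inl h.symm)) (pp_unique (pp_symm h01) h12)
    · -- PPL
      exact no_two_special (pp_sp_left h01) (pp_sp_right h01) (pp_ne h01) h23 h12
    · -- PLP
      exact no_two_special (pp_sp_left h23) (pp_sp_right h23) (pp_ne h23) h12 h01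
    · -- LPP
      exact no_two_special (pp_sp_left h12) (pp_sp_right h12) (pp_ne h12) h01 h23
  rcases w4 with - | @⟨_, v5, _, h45, w5⟩
  · -- cycle of length 4
    obtain ⟨-, -, hnd⟩ := (Walk.isCycle_def _).mp hw
    simp only [Walk.support_cons, Walk.support_nil, List.tail_cons, List.nodup_cons,
      List.mem_cons, List.mem_singleton, List.not_mem_nil, or_false, List.nodup_nil,
      and_true, not_false_eq_true, not_or] at hnd
    obtain ⟨⟨nd12, nd13, nd10⟩, ⟨nd23, nd20⟩, nd30⟩ := hnd
    rcases v with p0 | l0 <;>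
    rcases v1 with p1 | l1 <;>
    rcases v2 with p2 | l2 <;>
    rcases v3 with p3 | l3 <;>
      simp only [G_adj_pp, G_adj_pl, G_adj_lp, G_adj_ll] at h01 h12 h23 h34
    · -- PPPP
      exact (fun h => nd20 (congrArg Sum.inl h.symm)) (pp_unique (pp_symm h01) h12)
    · -- PPPL
      exact (fun h => nd20 (congrArg Sum.inl h.symm)) (pp_unique (pp_symm h01) h12)
    · -- PPLP
      exact (fun h => nd13 (congrArg Sum.inl h.symm)) (pp_unique (pp_symm h34) h01)
    · -- PLPP
      exact (fun h => nd20 (congrArg Sum.inl h)) (pp_unique (pp_symm h23) h34)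
    · -- PLPL
      exact (fun h => nd13 (congrArg Sum.inr h)) (line_eq_of_two_points (fun h => nd20 (congrArg Sum.inl h.symm)) h01 h12 h34 h23)
    · -- LPPP
      exact (fun h => nd13 (congrArg Sum.inl h)) (pp_unique (pp_symm h12) h23)
    · -- LPLP
      exact (fun h => nd20 (congrArg Sum.inr h)) (line_eq_of_two_points (fun h => nd13 (congrArg Sum.inl h)) h12 h23 h01 h34)
  rcases w5 with - | @⟨_, v6, _, h56, w6⟩
  · -- cycle of length 5
    obtain ⟨-, -, hnd⟩ := (Walk.isCycle_def _).mp hw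
    simp only [Walk.support_cons, Walk.support_nil, List.tail_cons, List.nodup_cons,
      List.mem_cons, List.mem_singleton, List.not_mem_nil, or_false, List.nodup_nil,
      and_true, not_false_eq_true, not_or] at hnd
    obtain ⟨⟨nd12, nd13, nd14, nd10⟩, ⟨nd23, nd24, nd20⟩, ⟨nd34, nd30⟩, nd40⟩ := hnd
    rcases v with p0 | l0 <;>
    rcases v1 with p1 | l1 <;>
    rcases v2 with p2 | l2 <;>
    rcases v3 with p3 | l3 <;>
    rcases v4 with p4 | l4 <;>
      simp only [G_adj_pp, G_adj_pl, G_adj_lp, G_adj_ll] at h01 h12 h23 h34 h45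
    · -- PPPPP
      exact (fun h => nd20 (congrArg Sum.inl h.symm)) (pp_unique (pp_symm h01) h12)
    · -- PPPPL
      exact (fun h => nd20 (congrArg Sum.inl h.symm)) (pp_unique (pp_symm h01) h12)
    · -- PPPLP
      exact (fun h => nd20 (congrArg Sum.inl h.symm)) (pp_unique (pp_symm h01) h12)
    · -- PPLPP
      exact (fun h => nd30 (congrArg Sum.inl h)) (pp_unique (pp_symm h34) h45)
    · -- PPLPL
      exact five h01 h12 h23 h34 h45 (fun h => nd24 (congrArg Sum.inr h)) (fun h => nd13 (congrArg Sum.inl h))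
    · -- PLPPP
      exact (fun h => nd24 (congrArg Sum.inl h)) (pp_unique (pp_symm h23) h34)
    · -- PLPPL
      exact five h23 h34 h45 h01 h12 (fun h => nd14 (congrArg Sum.inr h.symm)) (fun h => nd30 (congrArg Sum.inl h))
    · -- PLPLP
      exact five h45 h01 h12 h23 h34 (fun h => nd13 (congrArg Sum.inr h)) (fun h => nd20 (congrArg Sum.inl h.symm))
    · -- LPPPP
      exact (fun h => nd13 (congrArg Sum.inl h)) (pp_unique (pp_symm h12) h23)
    · -- LPPLP
      exact five h12 h23 h34 h45 h01 (fun h => nd30 (congrArg Sum.inr h)) (fun h => nd24 (congrArg Sum.inl h))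
    · -- LPLPP
      exact five h34 h45 h01 h12 h23 (fun h => nd20 (congrArg Sum.inr h.symm)) (fun h => nd14 (congrArg Sum.inl h.symm))
  rcases w6 with - | @⟨_, v7, _, h67, w7⟩
  · -- cycle of length 6
    obtain ⟨-, -, hnd⟩ := (Walk.isCycle_def _).mp hw
    simp only [Walk.support_cons, Walk.support_nil, List.tail_cons, List.nodup_cons,
      List.mem_cons, List.mem_singleton, List.not_mem_nil, or_false, List.nodup_nil,
      and_true, not_false_eq_true, not_or] at hnd
    obtain ⟨⟨nd12, nd13, nd14, nd15, nd10⟩, ⟨nd23, nd24, nd25, nd20⟩, ⟨nd34, nd35, nd30⟩, ⟨nd45, nd40⟩, nd50⟩ := hnd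
    rcases v with p0 | l0 <;>
    rcases v1 with p1 | l1 <;>
    rcases v2 with p2 | l2 <;>
    rcases v3 with p3 | l3 <;>
    rcases v4 with p4 | l4 <;>
    rcases v5 with p5 | l5 <;>
      simp only [G_adj_pp, G_adj_pl, G_adj_lp, G_adj_ll] at h01 h12 h23 h34 h45 h56
    · -- PPPPPP
      exact (fun h => nd20 (congrArg Sum.inl h.symm)) (pp_unique (pp_symm h01) h12)
    · -- PPPPPL
      exact (fun h => nd20 (congrArg Sum.inl h.symm)) (pp_unique (pp_symm h01) h12)
    · -- PPPPLP
      exact (fun h => nd20 (congrArg Sum.inl h.symm)) (pp_unique (pp_symm h01) h12)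
    · -- PPPLPP
      exact (fun h => nd20 (congrArg Sum.inl h.symm)) (pp_unique (pp_symm h01) h12)
    · -- PPPLPL
      exact (fun h => nd20 (congrArg Sum.inl h.symm)) (pp_unique (pp_symm h01) h12)
    · -- PPLPPP
      exact (fun h => nd35 (congrArg Sum.inl h)) (pp_unique (pp_symm h34) h45)
    · -- PPLPPL
      exact no_two_special (pp_sp_right h01) (pp_sp_left h34) (fun h => nd13 (congrArg Sum.inl h)) h12 h23
    · -- PPLPLP
      exact (fun h => nd15 (congrArg Sum.inl h.symm)) (pp_unique (pp_symm h56) h01)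
    · -- PLPPPP
      exact (fun h => nd24 (congrArg Sum.inl h)) (pp_unique (pp_symm h23) h34)
    · -- PLPPPL
      exact (fun h => nd24 (congrArg Sum.inl h)) (pp_unique (pp_symm h23) h34)
    · -- PLPPLP
      exact no_two_special (pp_sp_right h23) (pp_sp_left h56) (fun h => nd35 (congrArg Sum.inl h)) h34 h45
    · -- PLPLPP
      exact (fun h => nd40 (congrArg Sum.inl h)) (pp_unique (pp_symm h45) h56)
    · -- PLPLPL
      exact hex h56 h01 h12 h23 h34 h45 (fun h => nd13 (congrArg Sum.inr h)) (fun h => nd35 (congrArg Sum.inr h.symm)) (fun h => nd24 (congrArg Sum.inl h))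
    · -- LPPPPP
      exact (fun h => nd13 (congrArg Sum.inl h)) (pp_unique (pp_symm h12) h23)
    · -- LPPPLP
      exact (fun h => nd13 (congrArg Sum.inl h)) (pp_unique (pp_symm h12) h23)
    · -- LPPLPP
      exact no_two_special (pp_sp_right h12) (pp_sp_left h45) (fun h => nd24 (congrArg Sum.inl h)) h23 h34
    · -- LPLPPP
      exact (fun h => nd35 (congrArg Sum.inl h)) (pp_unique (pp_symm h34) h45)
    · -- LPLPLP
      exact hex h01 h12 h23 h34 h45 h56 (fun h => nd24 (congrArg Sum.inr h)) (fun h => nd40 (congrArg Sum.inr h.symm)) (fun h => nd35 (congrArg Sum.inl h))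
  -- length ≥ 7: contradiction with hlen
  simp only [Walk.length_cons] at hlen
  omega

end Cage7
namespace Cage7
open SimpleGraph
variable {F : Type} [Field F] {c : Cfg F}

lemma exists_seven_cycle
    (m1 m2 m3 δ α β γ : F)
    (hm1S : m1 ∈ c.S) (hm2S : m2 ∈ c.S) (hm3S : m3 ∈ c.S)
    (hm10 : m1 ≠ c.m0) (hm20 : m2 ≠ c.m0) (hm30 : m3 ≠ c.m0)
    (h12 : m1 ≠ m2) (h13 : m1 ≠ m3) (h23 : m2 ≠ m3)
    (hδ : δ ≠ 0) (hαne : α ≠ 0) (hβne : β ≠ 0) (hγne : γ ≠ 0)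
    (hsum : α + β + γ = δ)
    (LAG1 : m1 * α + m2 * β + m3 * γ = c.m0 * δ)
    (LAG2 : m1 ^ 2 * α + m2 ^ 2 * β + m3 ^ 2 * γ = c.m0 ^ 2 * δ)
    (h0A : (0:F) ∈ c.A) (hδA : δ ∈ c.A) (hsg0 : c.sg 0 = δ)
    (hxA : α ∈ c.A) (hyA : α + β ∈ c.A) :
    ∃ (v : V c) (w : (G c).Walk v v), w.IsCycle ∧ w.length = 7 := by
  have hsgδ : c.sg δ = 0 := by
    have := c.sginv 0 h0A; rw [hsg0] at this; exact this
  -- vertices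
  set P0 : Pt c := (⟨0, h0A⟩, 0, 0) with hP0
  set P' : Pt c := (⟨δ, hδA⟩, c.m0*δ, c.m0^2*δ) with hP'
  set Q : Pt c := (⟨α, hxA⟩, m1*α, m1^2*α) with hQ
  set R : Pt c := (⟨α+β, hyA⟩, m1*α + m2*β, m1^2*α + m2^2*β) with hR
  set M1 : Ln c := ⟨(⟨m1, hm1S⟩, 0, 0), fun h => hm10 h.1⟩ with hM1
  set M2 : Ln c := ⟨(⟨m2, hm2S⟩, (m1-m2)*α, (m1^2-m2^2)*α), fun h => hm20 h.1⟩ with hM2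
  set M3 : Ln c := ⟨(⟨m3, hm3S⟩, m1*α + m2*β - m3*(α+β),
      m1^2*α + m2^2*β - m3^2*(α+β)), fun h => hm30 h.1⟩ with hM3
  -- edges
  have e1 : (G c).Adj (.inl P') (.inl P0) := by
    refine ⟨?_, ?_, ?_, ?_, ?_, ?_⟩
    · show c.m0 ^ 2 * δ = c.m0 ^ 2 * δ; rfl
    · show (0 : F) = c.m0 ^ 2 * 0; ring
    · show (0 : F) = c.sg δ; exact hsgδ.symm
    · show (δ : F) = c.sg 0; exact hsg0.symm
    · show (0 : F) - c.m0 * 0 = c.m0 * δ - c.m0 * δ; ring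
    · show (δ : F) ≠ 0; exact hδ
  have e2 : (G c).Adj (.inl P0) (.inr M1) := by
    refine ⟨?_, ?_⟩
    · show (0 : F) = m1 * 0 + 0; ring
    · show (0 : F) = m1 ^ 2 * 0 + 0; ring
  have e3 : (G c).Adj (.inr M1) (.inl Q) := by
    refine ⟨?_, ?_⟩
    · show m1 * α = m1 * α + 0; ring
    · show m1 ^ 2 * α = m1 ^ 2 * α + 0; ring
  have e4 : (G c).Adj (.inl Q) (.inr M2) := by
    refine ⟨?_, ?_⟩
    · show m1 * α = m2 * α + (m1 - m2) * α; ring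
    · show m1 ^ 2 * α = m2 ^ 2 * α + (m1 ^ 2 - m2 ^ 2) * α; ring
  have e5 : (G c).Adj (.inr M2) (.inl R) := by
    refine ⟨?_, ?_⟩
    · show m1 * α + m2 * β = m2 * (α + β) + (m1 - m2) * α; ring
    · show m1 ^ 2 * α + m2 ^ 2 * β = m2 ^ 2 * (α + β) + (m1 ^ 2 - m2 ^ 2) * α; ring
  have e6 : (G c).Adj (.inl R) (.inr M3) := by
    refine ⟨?_, ?_⟩
    · show m1 * α + m2 * β = m3 * (α + β) + (m1 * α + m2 * β - m3 * (α + β)); ring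
    · show m1 ^ 2 * α + m2 ^ 2 * β
        = m3 ^ 2 * (α + β) + (m1 ^ 2 * α + m2 ^ 2 * β - m3 ^ 2 * (α + β)); ring
  have e7 : (G c).Adj (.inr M3) (.inl P') := by
    refine ⟨?_, ?_⟩
    · show c.m0 * δ = m3 * δ + (m1 * α + m2 * β - m3 * (α + β))
      linear_combination m3 * hsum - LAG1
    · show c.m0 ^ 2 * δ = m3 ^ 2 * δ + (m1 ^ 2 * α + m2 ^ 2 * β - m3 ^ 2 * (α + β))
      linear_combination m3 ^ 2 * hsum - LAG2
  -- distinctness of points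
  have aP0 : (P0.1.1 : F) = 0 := rfl
  have aP' : (P'.1.1 : F) = δ := rfl
  have aQ : (Q.1.1 : F) = α := rfl
  have aR : (R.1.1 : F) = α + β := rfl
  have dP0P' : P0 ≠ P' := by
    intro h; apply hδ
    have := congrArg (fun p : Pt c => (p.1.1 : F)) h
    simp only [aP0, aP'] at this; exact this.symm
  have dP0Q : P0 ≠ Q := by
    intro h; apply hαne
    have := congrArg (fun p : Pt c => (p.1.1 : F)) h
    simp only [aP0, aQ] at this; exact this.symm
  have dP0R : P0 ≠ R := by
    intro h
    have ha := congrArg (fun p : Pt c => (p.1.1 : F)) h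
    have hb := congrArg (fun p : Pt c => p.2.1) h
    simp only [aP0, aR] at ha
    have hb' : (0 : F) = m1 * α + m2 * β := hb
    have key : (m1 - m2) * α = 0 := by linear_combination -hb' + m2 * ha
    rcases mul_eq_zero.mp key with h' | h'
    · exact sub_ne_zero.mpr h12 h'
    · exact hαne h'
  have dQR : Q ≠ R := by
    intro h; apply hβne
    have := congrArg (fun p : Pt c => (p.1.1 : F)) h
    simp only [aQ, aR] at this
    linear_combination -this
  have dQP' : Q ≠ P' := by
    intro h
    have ha := congrArg (fun p : Pt c => (p.1.1 : F)) h
    have hb : m1 * α = c.m0 * δ := congrArg (fun p : Pt c => p.2.1) h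
    simp only [aQ, aP'] at ha
    have key : (m1 - c.m0) * α = 0 := by linear_combination hb - c.m0 * ha
    rcases mul_eq_zero.mp key with h' | h'
    · exact hm10 (sub_eq_zero.mp h')
    · exact hαne h'
  have dRP' : R ≠ P' := by
    intro h; apply hγne
    have := congrArg (fun p : Pt c => (p.1.1 : F)) h
    simp only [aR, aP'] at this
    linear_combination hsum - this
  -- distinctness of lines
  have dM1M2 : M1 ≠ M2 := by
    intro h; exact h12 (congrArg (fun l : Ln c => (l.1.1.1 : F)) h)
  have dM1M3 : M1 ≠ M3 := by
    intro h; exact h13 (congrArg (fun l : Ln c => (l.1.1.1 : F)) h)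
  have dM2M3 : M2 ≠ M3 := by
    intro h; exact h23 (congrArg (fun l : Ln c => (l.1.1.1 : F)) h)
  -- the walk
  refine ⟨.inl P', .cons e1 (.cons e2 (.cons e3 (.cons e4 (.cons e5 (.cons e6
    (.cons e7 .nil)))))), ?_, rfl⟩
  rw [Walk.isCycle_def]
  refine ⟨?_, by simp, ?_⟩
  · rw [Walk.isTrail_def]
    simp [Sym2.eq_iff, dP0P', dP0Q, dP0R, dQR, dQP', dRP', dM1M2, dM1M3, dM2M3,
      dP0P'.symm, dP0Q.symm, dP0R.symm, dQR.symm, dQP'.symm, dRP'.symm,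
      dM1M2.symm, dM1M3.symm, dM2M3.symm]
  · simp [dP0P', dP0Q, dP0R, dQR, dQP', dRP', dM1M2, dM1M3, dM2M3,
      dP0P'.symm, dP0Q.symm, dP0R.symm, dQR.symm, dQP'.symm, dRP'.symm,
      dM1M2.symm, dM1M3.symm, dM2M3.symm]

end Cage7

namespace Cage7
open SimpleGraph
variable {F : Type} [Field F] [DecidableEq F] {c : Cfg F}

/-- Degree of a line vertex. -/
lemma card_nbhd_line (l : Ln c) : Nat.card ((G c).neighborSet (.inr l)) = c.A.card := by
  have hbij : Function.Bijective (fun a : {x // x ∈ c.A} =>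
      (⟨.inl (a, l.1.1.1 * a + l.1.2.1, l.1.1.1 ^ 2 * a + l.1.2.2), ⟨rfl, rfl⟩⟩ :
        (G c).neighborSet (.inr l))) := by
    constructor
    · intro a a' h
      have := congrArg (fun w : (G c).neighborSet (.inr l) => w.1) h
      simp only [Sum.inl.injEq, Prod.mk.injEq] at this
      exact this.1
    · rintro ⟨(p | l'), hmem⟩
      · obtain ⟨hb, hc⟩ : inc c p l := hmem
        refine ⟨p.1, ?_⟩
        apply Subtype.ext
        show Sum.inl _ = Sum.inl p
        congr 1
        symm
        exact Pt.ext c rfl hb hc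
      · exact absurd hmem (G_adj_ll c l l')
  calc Nat.card ((G c).neighborSet (.inr l))
      = Nat.card {x // x ∈ c.A} := (Nat.card_eq_of_bijective _ hbij).symm
    _ = c.A.card := by rw [Nat.card_eq_fintype_card, Fintype.card_coe]

/-- The matching partner of a special point. -/
def partner (p : Pt c) : Pt c :=
  (⟨c.sg p.1.1, c.sgA _ p.1.2⟩, p.2.1 + c.m0 * (c.sg p.1.1 - p.1.1), c.m0 ^ 2 * c.sg p.1.1)

lemma adj_partner {p : Pt c} (hsp : sp p) : (G c).Adj (.inl p) (.inl (partner p)) := by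
  refine ⟨hsp, rfl, rfl, ?_, ?_, ?_⟩
  · exact (c.sginv _ p.1.2).symm
  · show p.2.1 + c.m0 * (c.sg p.1.1 - p.1.1) - c.m0 * (c.sg p.1.1) = p.2.1 - c.m0 * p.1.1
    ring
  · exact Ne.symm (c.sgne _ p.1.2)

lemma eq_partner {p p' : Pt c} (h : pp c p p') : p' = partner p := by
  refine Pt.ext c h.2.2.1 ?_ ?_
  · show p'.2.1 = p.2.1 + c.m0 * (c.sg p.1.1 - p.1.1)
    have h5 := h.2.2.2.2.1
    have h3 := h.2.2.1
    rw [← h3]; linear_combination h5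
  · show p'.2.2 = c.m0 ^ 2 * c.sg p.1.1
    rw [h.2.1, h.2.2.1]

/-- Degree of a point vertex. -/
lemma card_nbhd_point (p : Pt c) : Nat.card ((G c).neighborSet (.inl p)) = c.S.card := by
  by_cases hsp : p.2.2 = c.m0 ^ 2 * p.1.1
  · -- special point: m0 ↦ partner, other slopes ↦ lines
    set f : {x // x ∈ c.S} → (G c).neighborSet (.inl p) := fun m =>
      if hm : (m : F) = c.m0 then ⟨.inl (partner p), adj_partner hsp⟩
      else ⟨.inr ⟨(m, p.2.1 - m * p.1.1, p.2.2 - m ^ 2 * p.1.1), fun hh => hm hh.1⟩,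
        ⟨by ring, by ring⟩⟩ with hfdef
    have hbij : Function.Bijective f := by
      constructor
      · intro m m' h
        by_cases hm : (m : F) = c.m0 <;> by_cases hm' : (m' : F) = c.m0
        · exact Subtype.ext (hm.trans hm'.symm)
        · rw [hfdef] at h; simp only [dif_pos hm, dif_neg hm'] at h
          have := congrArg Subtype.val h
          simp at this
        · rw [hfdef] at h; simp only [dif_neg hm, dif_pos hm'] at h
          have := congrArg Subtype.val h
          simp at this
        · rw [hfdef] at h; simp only [dif_neg hm, dif_neg hm'] at h
          have := congrArg Subtype.val h
          simp only [Sum.inr.injEq, Subtype.mk.injEq, Prod.mk.injEq] at this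
          exact this.1
      · rintro ⟨(p' | l), hmem⟩
        · have hpp : pp c p p' := hmem
          refine ⟨⟨c.m0, c.hm0S⟩, ?_⟩
          rw [hfdef]; simp only [dif_pos]
          exact Subtype.ext (congrArg Sum.inl (eq_partner hpp).symm)
        · have hinc : inc c p l := hmem
          have hm0 : (l.1.1.1 : F) ≠ c.m0 := slope_ne_m0 hinc hsp
          refine ⟨l.1.1, ?_⟩
          rw [hfdef]; simp only [dif_neg hm0]
          apply Subtype.ext
          show Sum.inr _ = Sum.inr l
          congr 1
          refine Ln.ext' c rfl ?_ ?_
          · show p.2.1 - l.1.1.1 * p.1.1 = l.1.2.1; linear_combination hinc.1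
          · show p.2.2 - l.1.1.1 ^ 2 * p.1.1 = l.1.2.2; linear_combination hinc.2
    calc Nat.card ((G c).neighborSet (.inl p))
        = Nat.card {x // x ∈ c.S} := (Nat.card_eq_of_bijective _ hbij).symm
      _ = c.S.card := by rw [Nat.card_eq_fintype_card, Fintype.card_coe]
  · -- generic point
    set f : {x // x ∈ c.S} → (G c).neighborSet (.inl p) := fun m =>
      ⟨.inr ⟨(m, p.2.1 - m * p.1.1, p.2.2 - m ^ 2 * p.1.1),
        fun hh => hsp (by linear_combination hh.2 + p.1.1 * (m + c.m0) * hh.1)⟩,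
        ⟨by ring, by ring⟩⟩ with hfdef
    have hbij : Function.Bijective f := by
      constructor
      · intro m m' h
        have := congrArg Subtype.val h
        simp only [hfdef, Sum.inr.injEq, Subtype.mk.injEq, Prod.mk.injEq] at this
        exact this.1
      · rintro ⟨(p' | l), hmem⟩
        · exact absurd (hmem : pp c p p').1 hsp
        · have hinc : inc c p l := hmem
          refine ⟨l.1.1, ?_⟩
          apply Subtype.ext
          show Sum.inr _ = Sum.inr l
          congr 1
          refine Ln.ext' c rfl ?_ ?_
          · show p.2.1 - l.1.1.1 * p.1.1 = l.1.2.1; linear_combination hinc.1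
          · show p.2.2 - l.1.1.1 ^ 2 * p.1.1 = l.1.2.2; linear_combination hinc.2
    calc Nat.card ((G c).neighborSet (.inl p))
        = Nat.card {x // x ∈ c.S} := (Nat.card_eq_of_bijective _ hbij).symm
      _ = c.S.card := by rw [Nat.card_eq_fintype_card, Fintype.card_coe]

end Cage7

namespace Cage7
open SimpleGraph

/-- Core step for building fixed-point-free involutions. -/
lemma invol_glue {γ : Type} [DecidableEq γ] (A : Finset γ) {x y : γ}
    (hx : x ∈ A) (hy : y ∈ A) (hxy : x ≠ y) (σ' : γ → γ)
    (h1' : ∀ a ∈ A \ {x, y}, σ' a ∈ A \ {x, y})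
    (h2' : ∀ a ∈ A \ {x, y}, σ' (σ' a) = a)
    (h3' : ∀ a ∈ A \ {x, y}, σ' a ≠ a) :
    ∃ σ : γ → γ, (∀ a ∈ A, σ a ∈ A) ∧ (∀ a ∈ A, σ (σ a) = a) ∧ (∀ a ∈ A, σ a ≠ a) ∧
      σ x = y := by
  have hmemA' : ∀ z ∈ A, z ≠ x → z ≠ y → z ∈ A \ {x, y} := by
    intro z hz hzx hzy; rw [Finset.mem_sdiff]; simp [hz, hzx, hzy]
  have hA'x : ∀ z ∈ A \ {x, y}, z ≠ x ∧ z ≠ y := by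
    intro z hz; rw [Finset.mem_sdiff] at hz
    simp only [Finset.mem_insert, Finset.mem_singleton, not_or] at hz; exact hz.2
  refine ⟨fun z => if z = x then y else if z = y then x else σ' z, ?_, ?_, ?_, by simp⟩
  · intro a ha
    by_cases hax : a = x
    · simpa [hax] using hy
    · by_cases hay : a = y
      · simpa [hax, hay, hxy, Ne.symm hxy] using hx
      · simp only [if_neg hax, if_neg hay]
        exact (Finset.mem_sdiff.mp (h1' a (hmemA' a ha hax hay))).1
  · intro a ha
    by_cases hax : a = x
    · simp [hax, hxy, Ne.symm hxy]
    · by_cases hay : a = y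
      · simp [hax, hay, hxy, Ne.symm hxy]
      · simp only [if_neg hax, if_neg hay]
        have hmem := hmemA' a ha hax hay
        obtain ⟨hsx, hsy⟩ := hA'x _ (h1' a hmem)
        simp only [if_neg hsx, if_neg hsy]
        exact h2' a hmem
  · intro a ha
    by_cases hax : a = x
    · simp [hax]; exact Ne.symm hxy
    · by_cases hay : a = y
      · simp [hax, hay]; exact ⟨Ne.symm hxy, hxy⟩
      · simp only [if_neg hax, if_neg hay]
        exact h3' a (hmemA' a ha hax hay)

lemma card_sdiff_pair {γ : Type} [DecidableEq γ] (A : Finset γ) {x y : γ}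
    (hx : x ∈ A) (hy : y ∈ A) (hxy : x ≠ y) : (A \ {x, y}).card = A.card - 2 := by
  have hsub : {x, y} ⊆ A := by
    intro z hz; rcases Finset.mem_insert.mp hz with rfl | hz
    · exact hx
    · rw [Finset.mem_singleton.mp hz]; exact hy
  rw [Finset.card_sdiff_of_subset hsub, Finset.card_pair hxy]

/-- Fixed-point-free involutions exist on any finset of even cardinality. -/
lemma exists_invol0 {γ : Type} [DecidableEq γ] :
    ∀ (n : ℕ) (A : Finset γ), A.card = n → Even n →
    ∃ σ : γ → γ, (∀ a ∈ A, σ a ∈ A) ∧ (∀ a ∈ A, σ (σ a) = a) ∧ (∀ a ∈ A, σ a ≠ a) := by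
  intro n
  induction n using Nat.strong_induction_on with
  | _ n IH =>
    intro A hcard heven
    rcases A.eq_empty_or_nonempty with rfl | ⟨x, hx⟩
    · exact ⟨id, by simp, by simp, by simp⟩
    · have hpos : 0 < A.card := Finset.card_pos.mpr ⟨x, hx⟩
      obtain ⟨t, ht⟩ := heven
      have h2 : 2 ≤ A.card := by omega
      obtain ⟨y, hy, hyx⟩ := Finset.exists_mem_ne (s := A) (by omega) x
      have hcard' : (A \ {x, y}).card = n - 2 := by
        rw [card_sdiff_pair A hx hy (Ne.symm hyx), hcard]
      have heven2 : Even (n - 2) := ⟨t - 1, by omega⟩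
      obtain ⟨σ', h1', h2', h3'⟩ := IH (n - 2) (by omega) _ hcard' heven2
      obtain ⟨σ, hs1, hs2, hs3, -⟩ := invol_glue A hx hy (Ne.symm hyx) σ' h1' h2' h3'
      exact ⟨σ, hs1, hs2, hs3⟩

/-- Anchored fixed-point-free involution. -/
lemma exists_invol {γ : Type} [DecidableEq γ] (A : Finset γ) (heven : Even A.card)
    {x y : γ} (hx : x ∈ A) (hy : y ∈ A) (hxy : x ≠ y) :
    ∃ σ : γ → γ, (∀ a ∈ A, σ a ∈ A) ∧ (∀ a ∈ A, σ (σ a) = a) ∧ (∀ a ∈ A, σ a ≠ a) ∧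
      σ x = y := by
  have hcard' : (A \ {x, y}).card = A.card - 2 := card_sdiff_pair A hx hy hxy
  obtain ⟨t, ht⟩ := heven
  have heven2 : Even (A.card - 2) := ⟨t - 1, by omega⟩
  obtain ⟨σ', h1', h2', h3'⟩ := exists_invol0 (A.card - 2) _ hcard' heven2
  exact invol_glue A hx hy hxy σ' h1' h2' h3'

variable {F : Type} [Field F] [DecidableEq F] [Fintype F] {c : Cfg F}

lemma card_V : Nat.card (V c) =
    c.A.card * Fintype.card F * Fintype.card F
    + (c.S.card * Fintype.card F * Fintype.card F - Fintype.card F) := by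
  rw [Nat.card_sum]
  congr 1
  · rw [Nat.card_eq_fintype_card]
    simp [Fintype.card_prod, Fintype.card_coe, mul_assoc]
  · rw [Nat.card_eq_fintype_card]
    have h1 : Fintype.card (Ln c) =
        Fintype.card ({m // m ∈ c.S} × F × F)
        - Fintype.card {l : {m // m ∈ c.S} × F × F // (l.1.1 : F) = c.m0 ∧ l.2.2 = 0} :=
      Fintype.card_subtype_compl _
    have h2 : Fintype.card {l : {m // m ∈ c.S} × F × F // (l.1.1 : F) = c.m0 ∧ l.2.2 = 0}
        = Fintype.card F := by
      apply Fintype.card_congr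
      refine ⟨fun l => l.1.2.1, fun u => ⟨(⟨c.m0, c.hm0S⟩, u, 0), ⟨rfl, rfl⟩⟩, ?_, fun u => rfl⟩
      rintro ⟨⟨m, u, v⟩, h1, h2⟩
      apply Subtype.ext
      show ((⟨c.m0, c.hm0S⟩ : {m // m ∈ c.S}), u, (0:F)) = (m, u, v)
      refine Prod.ext (Subtype.ext h1.symm) (Prod.ext rfl h2.symm)
    rw [h1, h2]
    congr 1
    simp [Fintype.card_prod, Fintype.card_coe, mul_assoc]

lemma girth_seven (hcyc : ∃ (v : V c) (w : (G c).Walk v v), w.IsCycle ∧ w.length = 7) :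
    (G c).girth = 7 := by
  obtain ⟨v, w, hw, hlen⟩ := hcyc
  have hub : (G c).egirth ≤ 7 := by
    have h1 : (G c).egirth ≤ (w.length : ℕ∞) := by
      apply iInf_le_of_le v
      apply iInf_le_of_le w
      exact iInf_le _ hw
    rwa [hlen] at h1
  have hlb : (7 : ℕ∞) ≤ (G c).egirth := by
    rw [le_egirth]
    intro a w' hw'
    exact_mod_cast no_short a w' hw'
  have heq : (G c).egirth = 7 := le_antisymm hub hlb
  rw [SimpleGraph.girth, heq]
  rfl

end Cage7

/-- Transfer of girth along isomorphic graphs given by injective homs both ways. -/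
lemma egirth_eq_of_maps {α β : Type} {G1 : SimpleGraph α} {G2 : SimpleGraph β}
    (f : G1 →g G2) (g : G2 →g G1) (hf : Function.Injective f) (hg : Function.Injective g) :
    G1.egirth = G2.egirth := by
  apply le_antisymm
  · apply le_iInf; intro a; apply le_iInf; intro w; apply le_iInf; intro hw
    have hcyc : (SimpleGraph.Walk.map g w).IsCycle :=
      (SimpleGraph.Walk.map_isCycle_iff_of_injective hg).mpr hw
    calc G1.egirth ≤ ((SimpleGraph.Walk.map g w).length : ℕ∞) := by
          apply iInf_le_of_le (g a); apply iInf_le_of_le (SimpleGraph.Walk.map g w)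
          exact iInf_le _ hcyc
      _ = (w.length : ℕ∞) := by rw [SimpleGraph.Walk.length_map]
  · apply le_iInf; intro a; apply le_iInf; intro w; apply le_iInf; intro hw
    have hcyc : (SimpleGraph.Walk.map f w).IsCycle :=
      (SimpleGraph.Walk.map_isCycle_iff_of_injective hf).mpr hw
    calc G2.egirth ≤ ((SimpleGraph.Walk.map f w).length : ℕ∞) := by
          apply iInf_le_of_le (f a); apply iInf_le_of_le (SimpleGraph.Walk.map f w)
          exact iInf_le _ hcyc
      _ = (w.length : ℕ∞) := by rw [SimpleGraph.Walk.length_map]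

/-- `cageNum k g` is `n(k,g)`, the minimum number of vertices of a `k`-regular graph of
girth `g` (the order of a `(k,g)`-cage). -/
noncomputable def cageNum (k g : ℕ) : ℕ :=
  sInf {n | ∃ G : SimpleGraph (Fin n),
    (∀ v, Nat.card (G.neighborSet v) = k) ∧ G.girth = g}

namespace Cage7
open SimpleGraph

lemma egirth_seven {F : Type} [Field F] {c : Cfg F}
    (hcyc : ∃ (v : V c) (w : (G c).Walk v v), w.IsCycle ∧ w.length = 7) :
    (G c).egirth = 7 := by
  obtain ⟨v, w, hw, hlen⟩ := hcyc
  have hub : (G c).egirth ≤ 7 := by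
    have h1 : (G c).egirth ≤ (w.length : ℕ∞) := by
      apply iInf_le_of_le v
      apply iInf_le_of_le w
      exact iInf_le _ hw
    rwa [hlen] at h1
  have hlb : (7 : ℕ∞) ≤ (G c).egirth := by
    rw [le_egirth]
    intro a w' hw'
    exact_mod_cast no_short a w' hw'
  exact le_antisymm hub hlb

/-- The master construction lemma. -/
lemma master' (k : ℕ) (hk4 : 4 ≤ k) (hke : Even k)
    (F : Type) [Field F] [Fintype F] [DecidableEq F] (hkq : k ≤ Fintype.card F) :
    cageNum k 7 ≤ 2 * k * (Fintype.card F) ^ 2 - Fintype.card F := by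
  set Fq := Fintype.card F with hFq
  -- the universe avoiding -1 (except 1 itself)
  set U : Finset F := Finset.univ.filter (fun x : F => x = 1 ∨ x ≠ -1) with hU
  have h1U : (1 : F) ∈ U := by simp [hU]
  have hUcard : k ≤ U.card := by
    by_cases hneg : (-1 : F) = 1
    · have hUuniv : U = Finset.univ := by
        apply Finset.eq_univ_iff_forall.mpr
        intro x
        simp only [hU, Finset.mem_filter, Finset.mem_univ, true_and]
        by_cases hx : x = -1
        · left; rw [hx, hneg]
        · right; exact hx
      rw [hUuniv, Finset.card_univ]; exact hkq
    · -- char ≠ 2, so Fq is odd and k < Fq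
      have hchar : ringChar F ≠ 2 := by
        intro h2
        haveI : CharP F 2 := h2 ▸ ringChar.charP F
        exact hneg (CharTwo.neg_eq 1)
      have hodd : Fintype.card F % 2 = 1 := by
        have := (FiniteField.even_card_iff_char_two (F := F)).not.mp hchar
        omega
      have hkq' : k ≠ Fq := by
        intro h
        obtain ⟨t, ht⟩ := hke
        rw [← hFq] at hodd
        omega
      have hUU : U = Finset.univ.erase (-1) := by
        ext x
        simp only [hU, Finset.mem_filter, Finset.mem_univ, true_and, Finset.mem_erase,
          and_true]
        constructor
        · rintro (rfl | hx)
          · exact fun h => hneg h.symm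
          · exact hx
        · intro hx; right; exact hx
      rw [hUU, Finset.card_erase_of_mem (Finset.mem_univ _), Finset.card_univ, ← hFq]
      omega
  -- choose S
  obtain ⟨S, hS1, hSU, hScard⟩ := Finset.exists_subsuperset_card_eq (n := k - 1 + ({(1:F)} : Finset F).card)
    (Finset.singleton_subset_iff.mpr h1U) (by omega) (by rw [Finset.card_singleton]; omega)
  rw [Finset.card_singleton] at hScard
  have hScard' : S.card = k := by omega
  have hm0S : (1 : F) ∈ S := hS1 (Finset.mem_singleton_self 1)
  have star' : ∀ m ∈ S, m ^ 2 = (1:F) ^ 2 → m = 1 := by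
    intro m hm hsq
    have h0 : (m - 1) * (m + 1) = 0 := by linear_combination hsq
    rcases mul_eq_zero.mp h0 with h' | h'
    · exact sub_eq_zero.mp h'
    · have hm1 : m = -1 := by linear_combination h'
      have := hSU hm
      simp only [hU, Finset.mem_filter, Finset.mem_univ, true_and] at this
      rcases this with h | h
      · exact h
      · exact absurd hm1 h
  -- choose slopes
  have hSe : (S.erase 1).card = k - 1 := by
    rw [Finset.card_erase_of_mem hm0S, hScard']
  obtain ⟨T, hTsub, hTcard⟩ := Finset.exists_subset_card_eq (s := S.erase 1) (n := 3) (by omega)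
  obtain ⟨m1, m2, m3, h12, h13, h23, hT⟩ := Finset.card_eq_three.mp hTcard
  have hmem : ∀ m ∈ T, m ≠ 1 ∧ m ∈ S := by
    intro m hm; have := hTsub hm; rw [Finset.mem_erase] at this; exact this
  obtain ⟨hm11, hm1S⟩ := hmem m1 (by rw [hT]; simp)
  obtain ⟨hm21, hm2S⟩ := hmem m2 (by rw [hT]; simp)
  obtain ⟨hm31, hm3S⟩ := hmem m3 (by rw [hT]; simp)
  -- the interpolation coefficients
  have n12 : m1 - m2 ≠ 0 := sub_ne_zero.mpr h12
  have n13 : m1 - m3 ≠ 0 := sub_ne_zero.mpr h13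
  have n23 : m2 - m3 ≠ 0 := sub_ne_zero.mpr h23
  have n21 : m2 - m1 ≠ 0 := sub_ne_zero.mpr (Ne.symm h12)
  have n31 : m3 - m1 ≠ 0 := sub_ne_zero.mpr (Ne.symm h13)
  have n32 : m3 - m2 ≠ 0 := sub_ne_zero.mpr (Ne.symm h23)
  have n01 : (1:F) - m1 ≠ 0 := sub_ne_zero.mpr (Ne.symm hm11)
  have n02 : (1:F) - m2 ≠ 0 := sub_ne_zero.mpr (Ne.symm hm21)
  have n03 : (1:F) - m3 ≠ 0 := sub_ne_zero.mpr (Ne.symm hm31)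
  obtain ⟨α, hα⟩ : ∃ x, x = (1-m2)*(1-m3)/((m1-m2)*(m1-m3)) := ⟨_, rfl⟩
  obtain ⟨β, hβ⟩ : ∃ x, x = (1-m1)*(1-m3)/((m2-m1)*(m2-m3)) := ⟨_, rfl⟩
  obtain ⟨γ, hγ⟩ : ∃ x, x = (1-m1)*(1-m2)/((m3-m1)*(m3-m2)) := ⟨_, rfl⟩
  have hαne : α ≠ 0 := by
    rw [hα]; exact div_ne_zero (mul_ne_zero n02 n03) (mul_ne_zero n12 n13)
  have hβne : β ≠ 0 := by
    rw [hβ]; exact div_ne_zero (mul_ne_zero n01 n03) (mul_ne_zero n21 n23)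
  have hγne : γ ≠ 0 := by
    rw [hγ]; exact div_ne_zero (mul_ne_zero n01 n02) (mul_ne_zero n31 n32)
  have hsum : α + β + γ = 1 := by rw [hα, hβ, hγ]; field_simp; ring
  have LAG1 : m1 * α + m2 * β + m3 * γ = 1 := by rw [hα, hβ, hγ]; field_simp; ring
  have LAG2 : m1 ^ 2 * α + m2 ^ 2 * β + m3 ^ 2 * γ = 1 := by
    rw [hα, hβ, hγ]; field_simp; ring
  -- choose A
  set T4 : Finset F := {0, 1, α, α + β} with hT4def
  have hT4card : T4.card ≤ 4 := by
    apply le_trans (Finset.card_insert_le _ _)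
    apply Nat.succ_le_succ
    apply le_trans (Finset.card_insert_le _ _)
    apply Nat.succ_le_succ
    apply le_trans (Finset.card_insert_le _ _)
    apply Nat.succ_le_succ
    exact le_of_eq (Finset.card_singleton _)
  obtain ⟨A, hT4A, hAcard⟩ := Finset.exists_superset_card_eq
    (le_trans hT4card hk4) hkq
  have h0A : (0:F) ∈ A := hT4A (by simp [hT4def])
  have h1A : (1:F) ∈ A := hT4A (by simp [hT4def])
  have hxA : α ∈ A := hT4A (by simp [hT4def])
  have hyA : α + β ∈ A := hT4A (by simp [hT4def])
  -- choose the involution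
  obtain ⟨σ, hσ1, hσ2, hσ3, hσ0⟩ := exists_invol A (hAcard ▸ hke) h0A h1A
    (zero_ne_one)
  -- assemble the configuration
  set c : Cfg F := ⟨1, A, S, σ, hm0S, star', hσ1, hσ2, hσ3⟩ with hc
  have hcyc : ∃ (v : V c) (w : (G c).Walk v v), w.IsCycle ∧ w.length = 7 := by
    apply exists_seven_cycle m1 m2 m3 1 α β γ hm1S hm2S hm3S hm11 hm21 hm31
      h12 h13 h23 one_ne_zero hαne hβne hγne hsum
    · show m1 * α + m2 * β + m3 * γ = 1 * 1; rw [LAG1]; ring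
    · show m1 ^ 2 * α + m2 ^ 2 * β + m3 ^ 2 * γ = 1 ^ 2 * 1; rw [LAG2]; ring
    · exact h0A
    · exact h1A
    · exact hσ0
    · exact hxA
    · exact hyA
  -- cardinality
  have hq1 : 1 ≤ Fq := by omega
  have hXle : Fq ≤ k * Fq * Fq := by
    calc Fq = 1 * Fq * 1 := by ring
    _ ≤ k * Fq * Fq := by
        apply Nat.mul_le_mul
        · exact Nat.mul_le_mul_right _ (by omega)
        · omega
  have hN : Nat.card (V c) = 2 * k * Fq ^ 2 - Fq := by
    rw [card_V]
    show A.card * Fq * Fq + (S.card * Fq * Fq - Fq) = _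
    rw [hAcard, hScard', ← Nat.add_sub_assoc hXle]
    congr 1
    ring
  -- transfer to Fin N
  have hNfin : Fintype.card (V c) = 2 * k * Fq ^ 2 - Fq := by
    rw [← Nat.card_eq_fintype_card]; exact hN
  set e : V c ≃ Fin (2 * k * Fq ^ 2 - Fq) := Fintype.equivFinOfCardEq hNfin with he
  set Gfin : SimpleGraph (Fin (2 * k * Fq ^ 2 - Fq)) := SimpleGraph.comap e.symm (G c)
    with hGfin
  have hadj : ∀ i j, Gfin.Adj i j ↔ (G c).Adj (e.symm i) (e.symm j) := fun i j => Iff.rfl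
  apply Nat.sInf_le
  refine ⟨Gfin, ?_, ?_⟩
  · -- degrees
    intro i
    have hbij : Function.Bijective
        (fun j : Gfin.neighborSet i => (⟨e.symm j.1, j.2⟩ :
          (G c).neighborSet (e.symm i))) := by
      constructor
      · intro a b hab
        apply Subtype.ext
        have := congrArg Subtype.val hab
        exact e.symm.injective this
      · rintro ⟨w, hw⟩
        refine ⟨⟨e w, ?_⟩, ?_⟩
        · show (G c).Adj (e.symm i) (e.symm (e w))
          rwa [Equiv.symm_apply_apply]
        · apply Subtype.ext
          show e.symm (e w) = w
          exact Equiv.symm_apply_apply e w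
    rw [Nat.card_eq_of_bijective _ hbij]
    rcases hv : e.symm i with p | l
    · rw [card_nbhd_point, hScard']
    · rw [card_nbhd_line, hAcard]
  · -- girth
    have hee : Gfin.egirth = (G c).egirth :=
      egirth_eq_of_maps (G1 := Gfin) (G2 := G c) ⟨e.symm, fun {a b} h => h⟩
        ⟨e, fun {a b} h => by
          show (G c).Adj (e.symm (e a)) (e.symm (e b))
          rwa [Equiv.symm_apply_apply, Equiv.symm_apply_apply]⟩
        (fun {a b} h => e.symm.injective h) (fun {a b} h => e.injective h)
    rw [SimpleGraph.girth, hee, egirth_seven hcyc]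
    rfl

/-- Master lemma in terms of a prime power. -/
lemma master (k q : ℕ) (hk4 : 4 ≤ k) (hke : Even k)
    (hq : IsPrimePow q) (hkq : k ≤ q) :
    cageNum k 7 ≤ 2 * k * q ^ 2 - q := by
  obtain ⟨p, n, hp, hn, rfl⟩ := hq
  haveI : Fact p.Prime := ⟨Nat.prime_iff.mpr hp⟩
  letI F := GaloisField p n
  haveI : Fintype F := Fintype.ofFinite F
  letI : DecidableEq F := Classical.decEq F
  have hcard : Fintype.card F = p ^ n := by
    rw [← Nat.card_eq_fintype_card]
    exact GaloisField.card p n (by omega)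
  have := master' k hk4 hke F (by rw [hcard]; exact hkq)
  rwa [hcard] at this

end Cage7

/-- Let `k ≥ 4` be an even integer and let `q` be the smallest prime power with
`k ≤ q`. Then `n(k,7) ≤ 2kq² − q`. In particular, if `q` is odd, then
`n(q−1,7) ≤ 2q³ − 2q² − q = 2(q−1)³ + 4(q−1)² + (q−1) − 1`. -/
theorem cage_bound_even_k (k q : ℕ) (hk4 : 4 ≤ k) (hke : Even k)
    (hq : IsPrimePow q) (hkq : k ≤ q)
    (hmin : ∀ q' : ℕ, IsPrimePow q' → k ≤ q' → q ≤ q') :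
    cageNum k 7 ≤ 2 * k * q ^ 2 - q ∧
    (Odd q → cageNum (q - 1) 7 ≤ 2 * q ^ 3 - 2 * q ^ 2 - q) := by
  refine ⟨Cage7.master k q hk4 hke hq hkq, ?_⟩
  intro hqodd
  obtain ⟨t, ht⟩ := hqodd
  have hk4' : 4 ≤ q - 1 := by omega
  have hke' : Even (q - 1) := ⟨t, by omega⟩
  have hb := Cage7.master (q - 1) q hk4' hke' hq (by omega)
  obtain ⟨m, rfl⟩ : ∃ m, q = m + 1 := ⟨q - 1, by omega⟩
  simp only [Nat.add_sub_cancel] at hb ⊢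
  have h2 : 2 * (m+1) ^ 3 - 2 * (m+1) ^ 2 = 2 * m * (m+1) ^ 2 :=
    Nat.sub_eq_of_eq_add (by ring)
  calc cageNum m 7 ≤ 2 * m * (m+1) ^ 2 - (m+1) := hb
  _ = 2 * (m+1) ^ 3 - 2 * (m+1) ^ 2 - (m+1) := by rw [h2]
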